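/- Let r, ε, u0 be real numbers with 0 ≤ r < 1, ε ≥ 0, u0 ≥ 0, and set θ = r·ε·u0/(1−r)². Assume θ ≤ 1/4. Define U : ℕ → ℝ by U(0) = u0 and U(n+1) = u0 + r·(1 + ε·U(n))·U(n). Then U(n) converges as n → ∞, with limit (u0/(1−r))·(1 + 4θ/(1+√(1−4θ))²). -/

import Mathlib

set_option maxHeartbeats 1600000 in
theorem stmt_16 (r ε u0 θ : ℝ)
    (hr0 : 0 ≤ r) (hr1 : r < 1) (hε : 0 ≤ ε) (hu0 : 0 ≤ u0)
    (hθdef : θ = r * ε * u0 / (1 - r) ^ 2) (hθ : θ ≤ 1 / 4)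
    (U : ℕ → ℝ) (hU0 : U 0 = u0)
    (hUs : ∀ n : ℕ, U (n + 1) = u0 + r * (1 + ε * U n) * U n) :
    Filter.Tendsto U Filter.atTop
      (nhds ((u0 / (1 - r)) * (1 + 4 * θ / (1 + Real.sqrt (1 - 4 * θ)) ^ 2))) := by
  have h1r : 0 < 1 - r := by linarith
  have hθ0 : 0 ≤ θ := by
    rw [hθdef]; positivity
  set s := Real.sqrt (1 - 4 * θ) with hsdef
  have hs2 : s ^ 2 = 1 - 4 * θ := Real.sq_sqrt (by linarith)
  have hs0 : 0 ≤ s := Real.sqrt_nonneg _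
  have hs1 : s ≤ 1 := by nlinarith
  have hrεu0 : r * ε * u0 = θ * (1 - r) ^ 2 := by
    rw [hθdef]; field_simp
  set T := (u0 / (1 - r)) * (1 + 4 * θ / (1 + s) ^ 2) with hTdef
  have h1s : 0 < 1 + s := by linarith
  have hT2 : T = 2 * u0 / ((1 - r) * (1 + s)) := by
    rw [hTdef, show (4:ℝ) * θ = 1 - s ^ 2 by linarith]
    field_simp
    ring
  have hfix : u0 + r * (1 + ε * T) * T = T := by
    rw [hT2]
    field_simp
    linear_combination u0 * (1 - r) ^ 2 * hs2 + 4 * u0 * hrεu0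
  have hu0T : u0 ≤ T := by
    rw [hT2, le_div_iff₀ (by positivity)]
    nlinarith [mul_nonneg hu0 (sub_nonneg.2 hs1), mul_nonneg (mul_nonneg hr0 hu0) h1s.le]
  have hT0 : 0 ≤ T := le_trans hu0 hu0T
  have hpos : ∀ n, 0 ≤ U n := by
    intro n
    induction n with
    | zero => rw [hU0]; exact hu0
    | succ n ih =>
      rw [hUs]
      nlinarith [mul_nonneg hr0 ih, mul_nonneg (mul_nonneg hr0 hε) (mul_nonneg ih ih)]
  have hle : ∀ n, U n ≤ T := by
    intro n
    induction n with
    | zero => rw [hU0]; exact hu0T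
    | succ n ih =>
      rw [hUs]
      have h0n := hpos n
      nlinarith [hfix, mul_nonneg hr0 (sub_nonneg.2 ih),
        mul_nonneg (mul_nonneg (mul_nonneg hr0 hε) (sub_nonneg.2 ih))
          (add_nonneg hT0 h0n)]
  have hstep : ∀ n, U n ≤ U (n + 1) := by
    intro n
    induction n with
    | zero =>
      rw [hUs, hU0]
      nlinarith [mul_nonneg hr0 hu0, mul_nonneg (mul_nonneg hr0 hε) (mul_nonneg hu0 hu0)]
    | succ n ih =>
      rw [hUs (n + 1)]
      have ha := hpos n
      have hb := hpos (n + 1)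
      nlinarith [hUs n, mul_nonneg hr0 (sub_nonneg.2 ih),
        mul_nonneg (mul_nonneg (mul_nonneg hr0 hε) (sub_nonneg.2 ih)) (add_nonneg hb ha)]
  have hmono : Monotone U := monotone_nat_of_le_succ hstep
  have hbdd : BddAbove (Set.range U) := ⟨T, by rintro x ⟨n, rfl⟩; exact hle n⟩
  have hconv : Filter.Tendsto U Filter.atTop (nhds (⨆ n, U n)) :=
    tendsto_atTop_ciSup hmono hbdd
  set c := ⨆ n, U n with hcdef
  have hcT : c ≤ T := ciSup_le hle
  have hshift : Filter.Tendsto (fun n => U (n + 1)) Filter.atTop (nhds c) :=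
    hconv.comp (Filter.tendsto_add_atTop_nat 1)
  have hrhs : Filter.Tendsto (fun n => u0 + r * (1 + ε * U n) * U n) Filter.atTop
      (nhds (u0 + r * (1 + ε * c) * c)) :=
    Filter.Tendsto.const_add _ (((Filter.Tendsto.const_add _
      (hconv.const_mul ε)).const_mul r).mul hconv)
  have heq : (fun n => U (n + 1)) = fun n => u0 + r * (1 + ε * U n) * U n := by
    funext n; exact hUs n
  rw [heq] at hshift
  have hcfix : u0 + r * (1 + ε * c) * c = c := tendsto_nhds_unique hrhs hshift
  have h2T : 2 * (r * ε) * T = (1 - r) * (1 - s) := by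
    rw [hT2]
    field_simp
    linear_combination 4 * hrεu0 + (1 - r) ^ 2 * hs2
  have hrε : 0 ≤ r * ε := mul_nonneg hr0 hε
  clear_value s T c
  clear hUs hU0 hpos hle hstep hmono hbdd hshift hrhs heq hTdef hT2 hsdef hcdef
  have hceT : c = T := by
    by_contra hne
    have hlt : c < T := lt_of_le_of_ne hcT hne
    have hfac : (c - T) * ((1 - r) - r * ε * (c + T)) = 0 := by
      linear_combination hfix - hcfix
    have h0 : (1 - r) - r * ε * (c + T) = 0 := by
      rcases mul_eq_zero.mp hfac with h | h
      · exact absurd (by linarith : c = T) hne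
      · exact h
    have e1 : r * ε * c ≤ r * ε * T := mul_le_mul_of_nonneg_left hcT hrε
    have e2 : 1 - r ≤ 2 * (r * ε) * T := by nlinarith [e1, h0]
    have e3 : (1 - r) * s ≤ (1 - r) * 0 := by nlinarith [e2, h2T]
    have hsle : s ≤ 0 := (mul_le_mul_iff_right₀ h1r).mp e3
    have hsz : s = 0 := le_antisymm hsle hs0
    have hs2z : s ^ 2 = 0 := by rw [hsz]; ring
    have hθq : θ = 1 / 4 := by linarith [hs2]
    have hrεpos : 0 < r * ε := by
      rcases lt_or_eq_of_le hrε with h | h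
      · exact h
      · exfalso
        have h0' : r * ε * u0 = 0 := by rw [← h]; ring
        nlinarith [pow_pos h1r 2, h0', hrεu0, hθq]
    have e4 : r * ε * c < r * ε * T := mul_lt_mul_of_pos_left hlt hrεpos
    rw [hsz] at h2T
    nlinarith [e4, h0, h2T]
  rw [← hceT]
  exact hconv
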